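/- arXiv:1606.00040 — 2 statements merged into one kernel-verified Lean document; each statement's English description precedes it below -/
import Mathlib

section
/- Let κ be a regular uncountable cardinal and let f and g be one-to-one functions whose domains A and B are disjoint subsets of κ. Then there exist nonstationary sets A' ⊆ A and B' ⊆ B such that f[A \ A'] ∩ g[B \ B'] = ∅. -/
/-- `C` is a club (closed unbounded) subset of the ordinal `κ`. -/
def IsClubIn (C : Set Ordinal) (κ : Ordinal) : Prop :=
  C ⊆ Set.Iio κ ∧ (∀ α < κ, ∃ β ∈ C, α < β) ∧
    (∀ α < κ, 0 < α → (∀ β < α, ∃ γ ∈ C, β < γ ∧ γ < α) → α ∈ C)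

/-- `S` is nonstationary in `κ`: disjoint from some club. -/
def IsNonstationaryIn (S : Set Ordinal) (κ : Ordinal) : Prop :=
  ∃ C, IsClubIn C κ ∧ S ∩ C = ∅

lemma nonstat_of_inv (κ : Cardinal) (hreg : κ.IsRegular) (hunc : Cardinal.aleph0 < κ)
    (S : Set Ordinal) (hS : S ⊆ Set.Iio κ.ord) (p F : Ordinal → Ordinal)
    (hp : ∀ α ∈ S, p α < α) (hF : ∀ α ∈ S, F (p α) = α) :
    IsNonstationaryIn S κ.ord := by
  classical
  have hlim : Order.IsSuccLimit κ.ord := Cardinal.isSuccLimit_ord hreg.aleph0_le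
  set G : Ordinal → Ordinal := fun γ => if F γ < κ.ord then F γ else 0 with hG
  have hGlt : ∀ γ, G γ < κ.ord := by
    intro γ
    by_cases h : F γ < κ.ord
    · simp [hG, h]
    · simpa [hG, h] using hlim.pos
  have hGS : ∀ α ∈ S, G (p α) = α := by
    intro α hα
    have h1 : F (p α) = α := hF α hα
    have h2 : F (p α) < κ.ord := by rw [h1]; exact hS hα
    simp only [hG]
    rw [if_pos h2, h1]
  refine ⟨{α | α < κ.ord ∧ 0 < α ∧ ∀ γ < α, G γ < α}, ⟨?_, ?_, ?_⟩, ?_⟩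
  · intro α hα; exact hα.1
  · -- unbounded
    intro α hα
    -- iterate
    let e : ℕ → Ordinal := fun n => Nat.rec (Order.succ α)
      (fun _ x => max (Order.succ x) (Ordinal.blsub x (fun γ _ => G γ))) n
    have he0 : e 0 = Order.succ α := rfl
    have hes : ∀ n, e (n + 1) = max (Order.succ (e n)) (Ordinal.blsub (e n) (fun γ _ => G γ)) :=
      fun n => rfl
    have helt : ∀ n, e n < κ.ord := by
      intro n
      induction n with
      | zero => exact hlim.succ_lt hα
      | succ n ih =>
        rw [hes]
        refine max_lt (hlim.succ_lt ih) ?_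
        exact Cardinal.blsub_lt_ord_of_isRegular hreg
          (by rwa [Cardinal.lt_ord] at ih) (fun i _ => hGlt i)
    set β := ⨆ n, e n with hβ
    have heβ : ∀ n, e n ≤ β := fun n => Ordinal.le_iSup e n
    have hβlt : β < κ.ord := by
      refine Cardinal.iSup_lt_ord_lift_of_isRegular hreg ?_ helt
      simpa using hunc
    refine ⟨β, ⟨hβlt, ?_, ?_⟩, ?_⟩
    · exact lt_of_lt_of_le (Order.bot_lt_succ α) (heβ 0)
    · intro γ hγ
      obtain ⟨n, hn⟩ := Ordinal.lt_iSup_iff.mp hγ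
      have : G γ < Ordinal.blsub (e n) (fun γ _ => G γ) := Ordinal.lt_blsub _ γ hn
      exact lt_of_lt_of_le (this.trans_le (le_max_right _ _)) ((hes n) ▸ heβ (n + 1))
    · exact lt_of_lt_of_le (Order.lt_succ α) (heβ 0)
  · -- closed
    intro α hα h0 hcl
    refine ⟨hα, h0, ?_⟩
    intro γ hγ
    obtain ⟨c, hc, hγc, hcα⟩ := hcl γ hγ
    exact (hc.2.2 γ hγc).trans hcα
  · -- disjoint from S
    ext α
    simp only [Set.mem_inter_iff, Set.mem_setOf_eq, Set.mem_empty_iff_false, iff_false]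
    rintro ⟨hαS, _, _, hcl⟩
    have := hcl (p α) (hp α hαS)
    rw [hGS α hαS] at this
    exact absurd this (lt_irrefl α)

/-- If `κ` is a regular uncountable cardinal and `f, g` are one-to-one functions whose
domains `A, B` are disjoint subsets of `κ`, then there are nonstationary `A' ⊆ A`,
`B' ⊆ B` with `f[A \ A'] ∩ g[B \ B'] = ∅`. -/
theorem rigid_ideals_stmt0 {X : Type*} (κ : Cardinal) (hreg : κ.IsRegular)
    (hunc : Cardinal.aleph0 < κ)
    (A B : Set Ordinal) (hA : A ⊆ Set.Iio κ.ord) (hB : B ⊆ Set.Iio κ.ord)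
    (hAB : Disjoint A B) (f g : Ordinal → X)
    (hf : Set.InjOn f A) (hg : Set.InjOn g B) :
    ∃ A' B', A' ⊆ A ∧ B' ⊆ B ∧ IsNonstationaryIn A' κ.ord ∧
      IsNonstationaryIn B' κ.ord ∧ f '' (A \ A') ∩ g '' (B \ B') = ∅ := by
  classical
  -- π : partial inverse from A side to B side
  set π : Ordinal → Ordinal := fun a => if h : ∃ b ∈ B, g b = f a then h.choose else 0 with hπ
  set σ : Ordinal → Ordinal := fun b => if h : ∃ a ∈ A, f a = g b then h.choose else 0 with hσ
  have hπspec : ∀ a, (∃ b ∈ B, g b = f a) → π a ∈ B ∧ g (π a) = f a := by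
    intro a h
    simp only [hπ, dif_pos h]
    exact ⟨h.choose_spec.1, h.choose_spec.2⟩
  have hσspec : ∀ b, (∃ a ∈ A, f a = g b) → σ b ∈ A ∧ f (σ b) = g b := by
    intro b h
    simp only [hσ, dif_pos h]
    exact ⟨h.choose_spec.1, h.choose_spec.2⟩
  set A' : Set Ordinal := {a | a ∈ A ∧ (∃ b ∈ B, g b = f a) ∧ π a < a} with hA'
  set B' : Set Ordinal := {b | b ∈ B ∧ (∃ a ∈ A, f a = g b) ∧ σ b < b} with hB'
  -- inverse function for nonstationarity of A'
  set FA : Ordinal → Ordinal := fun γ => if h : ∃ a ∈ A', π a = γ then h.choose else 0 with hFA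
  set FB : Ordinal → Ordinal := fun γ => if h : ∃ b ∈ B', σ b = γ then h.choose else 0 with hFB
  have hFAspec : ∀ a ∈ A', FA (π a) = a := by
    intro a ha
    have h : ∃ a' ∈ A', π a' = π a := ⟨a, ha, rfl⟩
    simp only [hFA, dif_pos h]
    obtain ⟨ha', hπa'⟩ := h.choose_spec
    have e1 := (hπspec _ ha'.2.1).2
    have e2 := (hπspec _ ha.2.1).2
    exact hf ha'.1 ha.1 (by rw [← e1, ← e2, hπa'])
  have hFBspec : ∀ b ∈ B', FB (σ b) = b := by
    intro b hb
    have h : ∃ b' ∈ B', σ b' = σ b := ⟨b, hb, rfl⟩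
    simp only [hFB, dif_pos h]
    obtain ⟨hb', hσb'⟩ := h.choose_spec
    have e1 := (hσspec _ hb'.2.1).2
    have e2 := (hσspec _ hb.2.1).2
    exact hg hb'.1 hb.1 (by rw [← e1, ← e2, hσb'])
  refine ⟨A', B', fun a ha => ha.1, fun b hb => hb.1, ?_, ?_, ?_⟩
  · exact nonstat_of_inv κ hreg hunc A' (fun a ha => hA ha.1) π FA
      (fun a ha => ha.2.2) hFAspec
  · exact nonstat_of_inv κ hreg hunc B' (fun b hb => hB hb.1) σ FB
      (fun b hb => hb.2.2) hFBspec
  · ext x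
    simp only [Set.mem_inter_iff, Set.mem_image, Set.mem_diff, Set.mem_empty_iff_false, iff_false]
    rintro ⟨⟨a, ⟨haA, haA'⟩, rfl⟩, ⟨b, ⟨hbB, hbB'⟩, hgb⟩⟩
    have hex : ∃ b' ∈ B, g b' = f a := ⟨b, hbB, hgb⟩
    have hex' : ∃ a' ∈ A, f a' = g b := ⟨a, haA, hgb.symm⟩
    have hπa : π a = b := hg (hπspec a hex).1 hbB (by rw [(hπspec a hex).2, hgb])
    have hσb : σ b = a := hf (hσspec b hex').1 haA (by rw [(hσspec b hex').2, hgb])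
    have hne : a ≠ b := fun h => (Set.disjoint_left.mp hAB haA) (h ▸ hbB)
    have h1 : ¬ π a < a := fun h => haA' ⟨haA, hex, h⟩
    have h2 : ¬ σ b < b := fun h => hbB' ⟨hbB, hex', h⟩
    rw [hπa] at h1
    rw [hσb] at h2
    exact hne (le_antisymm (not_lt.mp h1) (not_lt.mp h2))
end

section
/- Let μ be regular uncountable and let ⟨c_i : i < γ⟩ (γ < μ) be a descending sequence in the poset Code whose conditions are closed bounded subsets of κ with the end-extension ordering, where every ordinal appearing in forbidden sets E_α has V-cofinality > μ. If δ = sup_i max(c_i) has cofinality ≤ γ < μ, then ⋃_i c_i ∪ {δ} is a closed bounded set that is a lower bound of the sequence: the union of an end-extension-decreasing chain of closed bounded sets, together with the supremum of their maxima, is closed, and it avoids the forbidden sets since δ has small cofinality while all forbidden ordinals have cofinality > μ. -/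
/-- A set of ordinals is closed if it contains all of its limit points. -/
def IsClosedSet (c : Set Ordinal) : Prop :=
  ∀ α, 0 < α → (∀ β < α, ∃ γ ∈ c, β < γ ∧ γ < α) → α ∈ c

/-- Lower bounds for descending chains in the coding forcing: let `μ` be regular
uncountable and `⟨c_i : i < γ⟩` (with `γ < μ`) an end-extension-descending chain of
nonempty closed bounded sets of ordinals with maxima `m i`. Suppose every ordinal in any
forbidden set `E α` has cofinality `> μ`, and `δ = sup_i m i` has cofinality at most
`|γ| < μ`. Then `⋃_i c_i ∪ {δ}` is a closed bounded set end-extending every `c_i`, and `δ`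
avoids all forbidden sets. -/
theorem rigid_ideals_stmt19 (mu : Cardinal) (hreg : mu.IsRegular)
    (hunc : Cardinal.aleph0 < mu)
    (γ : Ordinal) (hγpos : 0 < γ) (hγ : γ < mu.ord)
    (c : Ordinal → Set Ordinal) (m : Ordinal → Ordinal)
    (hcond : ∀ i < γ, IsClosedSet (c i) ∧ m i ∈ c i ∧ ∀ x ∈ c i, x ≤ m i)
    (hchain : ∀ i j, i ≤ j → j < γ →
      c i ⊆ c j ∧ ∀ x ∈ c j, x ≤ m i → x ∈ c i)
    (E : Ordinal → Set Ordinal) (hE : ∀ α, ∀ x ∈ E α, mu < Ordinal.cof x)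
    (δ : Ordinal) (hδ : δ = sSup (m '' Set.Iio γ))
    (hδcof : Ordinal.cof δ ≤ Ordinal.card γ) :
    IsClosedSet ((⋃ i ∈ Set.Iio γ, c i) ∪ {δ}) ∧
    (∀ x ∈ (⋃ i ∈ Set.Iio γ, c i) ∪ {δ}, x ≤ δ) ∧
    (∀ i < γ, c i ⊆ (⋃ i ∈ Set.Iio γ, c i) ∪ {δ} ∧
      ∀ x ∈ (⋃ i ∈ Set.Iio γ, c i) ∪ {δ}, x ≤ m i → x ∈ c i) ∧
    (∀ α, δ ∉ E α) := by
  have hne : (m '' Set.Iio γ).Nonempty := ⟨m 0, 0, hγpos, rfl⟩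
  have hbdd : BddAbove (m '' Set.Iio γ) := Ordinal.bddAbove_of_small
  have hmle : ∀ i < γ, m i ≤ δ := fun i hi => hδ ▸ le_csSup hbdd ⟨i, hi, rfl⟩
  -- membership of the union into some c i
  have hmem : ∀ x ∈ (⋃ i ∈ Set.Iio γ, c i), ∃ j < γ, x ∈ c j := by
    intro x hx
    simp only [Set.mem_iUnion, Set.mem_Iio] at hx
    obtain ⟨j, hj, hxj⟩ := hx
    exact ⟨j, hj, hxj⟩
  have hbound : ∀ x ∈ (⋃ i ∈ Set.Iio γ, c i) ∪ {δ}, x ≤ δ := by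
    intro x hx
    rcases hx with hx | hx
    · obtain ⟨j, hj, hxj⟩ := hmem x hx
      exact le_trans ((hcond j hj).2.2 x hxj) (hmle j hj)
    · exact le_of_eq hx
  -- key: if x in union and x ≤ m i with i < γ then x ∈ c i
  have hdown : ∀ i < γ, ∀ x ∈ (⋃ i ∈ Set.Iio γ, c i), x ≤ m i → x ∈ c i := by
    intro i hi x hx hxm
    obtain ⟨j, hj, hxj⟩ := hmem x hx
    rcases le_total j i with h | h
    · exact (hchain j i h hi).1 hxj
    · exact (hchain i j h hj).2 x hxj hxm
  refine ⟨?_, hbound, ?_, ?_⟩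
  · -- closedness
    intro α hα hlim
    rcases lt_trichotomy α δ with hlt | heq | hgt
    · -- α < δ : find i with α ≤ m i, show α ∈ c i
      have : ∃ b ∈ m '' Set.Iio γ, α < b := by
        rw [hδ] at hlt
        exact exists_lt_of_lt_csSup hne hlt
      obtain ⟨b, ⟨i, hi, rfl⟩, hab⟩ := this
      have : α ∈ c i := by
        apply (hcond i (Set.mem_Iio.mp hi)).1 α hα
        intro β hβ
        obtain ⟨g, hg, hβg, hgα⟩ := hlim β hβ
        refine ⟨g, ?_, hβg, hgα⟩
        rcases hg with hg | hg
        · exact hdown i hi g hg (le_of_lt (hgα.trans_le hab.le))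
        · exact absurd (hg ▸ hgα) (not_lt.mpr hlt.le)
      exact Or.inl (Set.mem_biUnion hi this)
    · exact Or.inr heq
    · -- α > δ : contradiction, take β = δ
      obtain ⟨g, hg, hδg, _⟩ := hlim δ hgt
      exact absurd (hbound g hg) (not_le.mpr hδg)
  · intro i hi
    refine ⟨fun x hx => Or.inl (Set.mem_biUnion hi hx), ?_⟩
    intro x hx hxm
    rcases hx with hx | hx
    · exact hdown i hi x hx hxm
    · have : δ = m i := le_antisymm (hx ▸ hxm) (hmle i hi)
      rw [Set.mem_singleton_iff.mp hx, this]
      exact (hcond i hi).2.1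
  · intro α hδE
    have h1 : mu < Ordinal.cof δ := hE α δ hδE
    have h2 : Ordinal.card γ < mu := by
      rwa [← Cardinal.lt_ord]
    exact absurd (hδcof.trans_lt h2) (not_lt.mpr h1.le)
end
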